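/- Let h₀(z) = z/(3-z) and h₁(z) = 1/(2-z). For any m ≥ 3 and any x₁,...,x_m ∈ {0,1}, we have h_{x₁} ∘ ⋯ ∘ h_{x_m}(1) − h_{x₁} ∘ ⋯ ∘ h_{x_m}(0) ≤ 9·(1 − h₁^m(0)) = 9/(m+1). -/

import Mathlib

noncomputable def h (b : Bool) (z : ℝ) : ℝ := if b then 1 / (2 - z) else z / (3 - z)

noncomputable def h1 (z : ℝ) : ℝ := 1 / (2 - z)

lemma foldr_comp_append (fs : List (ℝ → ℝ)) (g : ℝ → ℝ) :
    fs.foldr (· ∘ ·) g = fs.foldr (· ∘ ·) id ∘ g := by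
  induction fs with
  | nil => rfl
  | cons f fs ih => simp only [List.foldr_cons, ih]; rfl

lemma key (L : List Bool) : ∃ a b c d : ℝ,
    (∀ z : ℝ, 0 ≤ z → z ≤ 1 →
      ((L.map h).foldr (· ∘ ·) id) z = (a*z+b)/(c*z+d)) ∧
    0 < c + d ∧ c + d ≤ d ∧ a*d - b*c ≤ (c+d)^2 ∧ 0 < a*d - b*c ∧
    (L.length + 1 : ℝ) * (a*d - b*c) ≤ d*(c+d) := by
  induction L using List.reverseRecOn with
  | nil =>
    refine ⟨1, 0, 0, 1, ?_, by norm_num, by norm_num, by norm_num, by norm_num, by norm_num⟩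
    intro z _ _; simp
  | append_singleton L b₀ ih =>
    obtain ⟨a, b, c, d, hf, hv, hvu, hv2, hdet, hn⟩ := ih
    have hd : 0 < d := lt_of_lt_of_le hv hvu
    have hc : c ≤ 0 := by linarith
    have hmap : (L ++ [b₀]).map h = L.map h ++ [h b₀] := by simp
    have hcomp : ((L ++ [b₀]).map h).foldr (· ∘ ·) id
        = ((L.map h).foldr (· ∘ ·) id) ∘ h b₀ := by
      rw [hmap, List.foldr_append, List.foldr_cons, List.foldr_nil,
        foldr_comp_append]
      rfl
    have hlen : ((L ++ [b₀]).length : ℝ) = (L.length : ℝ) + 1 := by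
      simp
    cases b₀ with
    | false =>
      refine ⟨a - b, 3*b, c - d, 3*d, ?_, by linarith, by linarith, by nlinarith,
        by nlinarith, ?_⟩
      · intro z hz0 hz1
        have h3 : (0:ℝ) < 3 - z := by linarith
        have hw0 : 0 ≤ z / (3 - z) := div_nonneg hz0 (le_of_lt h3)
        have hw1 : z / (3 - z) ≤ 1 := by
          rw [div_le_one h3]; linarith
        have hden : 0 < c * (z / (3 - z)) + d := by
          nlinarith [mul_nonneg (neg_nonneg.2 hc) (sub_nonneg.2 hw1)]
        have hden' : 0 < (c - d) * z + 3 * d := by nlinarith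
        have hwz : h false z = z / (3 - z) := by simp [h]
        rw [hcomp, Function.comp_apply, hwz, hf _ hw0 hw1]
        rw [div_eq_div_iff (ne_of_gt hden) (ne_of_gt hden')]
        field_simp
        ring
      · rw [hlen]
        nlinarith
    | true =>
      refine ⟨-b, a + 2*b, -d, c + 2*d, ?_, by linarith, by linarith, by nlinarith,
        by nlinarith, ?_⟩
      · intro z hz0 hz1
        have h2 : (0:ℝ) < 2 - z := by linarith
        have hw0 : 0 ≤ 1 / (2 - z) := by positivity
        have hw1 : 1 / (2 - z) ≤ 1 := by
          rw [div_le_one h2]; linarith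
        have hden : 0 < c * (1 / (2 - z)) + d := by
          nlinarith [mul_nonneg (neg_nonneg.2 hc) (sub_nonneg.2 hw1)]
        have hden' : 0 < -d * z + (c + 2 * d) := by nlinarith
        have hwz : h true z = 1 / (2 - z) := by simp [h]
        rw [hcomp, Function.comp_apply, hwz, hf _ hw0 hw1]
        rw [div_eq_div_iff (ne_of_gt hden) (ne_of_gt hden')]
        field_simp
        ring
      · rw [hlen]
        nlinarith

lemma h1_iter (n : ℕ) : h1^[n] 0 = (n : ℝ) / (n + 1) := by
  induction n with
  | zero => simp
  | succ n ih =>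
    rw [Function.iterate_succ_apply', ih, h1]
    have hn1 : (n : ℝ) + 1 ≠ 0 := by positivity
    have hn2 : (n : ℝ) + 2 ≠ 0 := by positivity
    push_cast
    rw [show (2:ℝ) - (n:ℝ)/((n:ℝ)+1) = ((n:ℝ)+2)/((n:ℝ)+1) by field_simp; ring]
    rw [one_div_div]
    ring_nf

theorem stmt_14 (m : ℕ) (hm : 3 ≤ m) (x : Fin m → Bool) :
    ((List.ofFn fun i => h (x i)).foldr (· ∘ ·) id) 1
      - ((List.ofFn fun i => h (x i)).foldr (· ∘ ·) id) 0
      ≤ 9 * (1 - h1^[m] 0) ∧ 9 * (1 - h1^[m] 0) = 9 / (m + 1) := by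
  have hiter : h1^[m] 0 = (m : ℝ) / (m + 1) := h1_iter m
  have hm1 : (0:ℝ) < (m : ℝ) + 1 := by positivity
  have heq : 9 * (1 - h1^[m] 0) = 9 / ((m : ℝ) + 1) := by
    rw [hiter]; field_simp; ring
  refine ⟨?_, heq⟩
  rw [heq]
  obtain ⟨a, b, c, d, hf, hv, hvu, hv2, hdet, hn⟩ := key (List.ofFn x)
  have hd : 0 < d := lt_of_lt_of_le hv hvu
  have hmap : (List.ofFn fun i => h (x i)) = (List.ofFn x).map h := by
    rw [List.map_ofFn]; rfl
  rw [hmap]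
  simp only [List.length_ofFn] at hn
  rw [hf 1 (by norm_num) le_rfl, hf 0 le_rfl (by norm_num)]
  have hwidth : (a*1+b)/(c*1+d) - (a*0+b)/(c*0+d) = (a*d-b*c)/(d*(c+d)) := by
    rw [div_sub_div _ _ (ne_of_gt (by linarith) : c*1+d ≠ 0) (ne_of_gt (by linarith) : c*0+d ≠ 0), div_eq_div_iff (mul_ne_zero (ne_of_gt (by linarith) : c*1+d ≠ 0) (ne_of_gt (by linarith) : c*0+d ≠ 0)) (ne_of_gt (mul_pos hd hv))]
    ring
  rw [hwidth, div_le_div_iff₀ (by positivity) hm1]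
  nlinarith [hn, mul_pos hd hv]
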